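/- Let n ≥ 3 and suppose there exists a finite family 𝔉 = (𝓕_1, …, 𝓕_l) of finite sequences of simple graphs, each graph in each sequence having fewer than n vertices, such that the real matrix M with rows indexed by the sequences in 𝔉 and columns indexed by the isomorphism classes of n-vertex simple graphs, whose (𝓕, [H]) entry is c(𝓕, H), satisfies rank_ℝ(M) = ψ(n), the number of isomorphism classes of n-vertex simple graphs. Then every n-vertex simple graph is reconstructible: for all n-vertex graphs G and G', if G' is a reconstruction of G then G' is isomorphic to G. -/

import Mathlib

open SimpleGraph

/-- The vertex-deleted subgraph `G − v`: the induced subgraph of `G` obtained by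
deleting `v` and all edges incident with `v`. -/
abbrev vdel {n : ℕ} (G : SimpleGraph (Fin n)) (v : Fin n) :
    SimpleGraph ({v}ᶜ : Set (Fin n)) :=
  G.induce {v}ᶜ

/-- `H` is a reconstruction of `G`: there is a bijection `f` between the vertex
sets such that `G − v ≅ H − f v` for every vertex `v`. -/
def IsReconstruction {n : ℕ} (G H : SimpleGraph (Fin n)) : Prop :=
  ∃ f : Fin n ≃ Fin n, ∀ v : Fin n, Nonempty (vdel G v ≃g vdel H (f v))

/-- `s(F,G)`: the number of subgraphs of `G` isomorphic to `F`. -/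
noncomputable def subCount {k n : ℕ} (F : SimpleGraph (Fin k))
    (G : SimpleGraph (Fin n)) : ℕ :=
  Nat.card {H : G.Subgraph // Nonempty (F ≃g H.coe)}

/-- A finite sequence of simple graphs (on arbitrary finite vertex sets). -/
abbrev GSeq : Type := List (Σ k : ℕ, SimpleGraph (Fin k))

/-- `c(𝓕,G)`: the number of covers of `G` by the sequence `L`, i.e. of sequences
of subgraphs of `G`, the `i`-th being isomorphic to the `i`-th graph of `L`,
whose union (of both vertex sets and edge sets) is all of `G`. -/
noncomputable def coverCount {n : ℕ} (L : GSeq) (G : SimpleGraph (Fin n)) : ℕ :=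
  Nat.card {C : Fin L.length → G.Subgraph //
    (∀ i, Nonempty ((L.get i).2 ≃g (C i).coe)) ∧ (⨆ i, C i) = ⊤}

section found
variable {V W U : Type} {G : SimpleGraph V} {G' : SimpleGraph W} {G'' : SimpleGraph U}

noncomputable instance sgFintype [Finite V] (G : SimpleGraph V) : Fintype G.Subgraph := by
  have : Finite G.Subgraph := by
    apply Finite.of_injective (fun X : G.Subgraph => (X.verts, X.Adj))
    intro X Y h
    exact SimpleGraph.Subgraph.ext (congrArg Prod.fst h) (congrArg Prod.snd h)
  exact Fintype.ofFinite _

/-- coe of mapped subgraph is isomorphic to coe, for injective homs -/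
noncomputable def sgMapIso (f : G →g G') (hf : Function.Injective f) (Y : G.Subgraph) :
    Y.coe ≃g (Y.map f).coe where
  toEquiv := (Equiv.Set.image f Y.verts hf)
  map_rel_iff' := by
    rintro ⟨a, ha⟩ ⟨b, hb⟩
    simp only [Equiv.Set.image, Equiv.Set.imageOfInjOn, SimpleGraph.Subgraph.coe_adj,
      SimpleGraph.Subgraph.map_adj, Relation.Map]
    constructor
    · rintro ⟨u, v, huv, hu, hv⟩
      rwa [hf hu, hf hv] at huv
    · intro h; exact ⟨a, b, h, rfl, rfl⟩

lemma sgMap_gc (f : G →g G') :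
    GaloisConnection (SimpleGraph.Subgraph.map f) (SimpleGraph.Subgraph.comap f) :=
  fun H H' => SimpleGraph.Subgraph.map_le_iff_le_comap f H H'

lemma sgMap_iSup {ι : Sort*} (f : G →g G') (C : ι → G.Subgraph) :
    (⨆ i, C i).map f = ⨆ i, (C i).map f :=
  (sgMap_gc f).l_iSup

lemma sgMap_comp (Y : G.Subgraph) (f : G →g G') (g : G' →g G'') :
    (Y.map f).map g = Y.map (g.comp f) := (SimpleGraph.Subgraph.map_comp Y f g).symm

/-- the equivalence of subgraph lattices induced by an isomorphism -/
noncomputable def sgEquiv (e : G ≃g G') : G.Subgraph ≃ G'.Subgraph where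
  toFun := SimpleGraph.Subgraph.map e.toHom
  invFun := SimpleGraph.Subgraph.map e.symm.toHom
  left_inv := by
    intro Y
    rw [sgMap_comp]
    have : (e.symm.toHom.comp e.toHom) = SimpleGraph.Hom.id := by
      ext v; simp
    rw [this, SimpleGraph.Subgraph.map_id]
  right_inv := by
    intro Y
    rw [sgMap_comp]
    have : (e.toHom.comp e.symm.toHom) = SimpleGraph.Hom.id := by
      ext v; simp
    rw [this, SimpleGraph.Subgraph.map_id]

lemma sgEquiv_top (e : G ≃g G') : sgEquiv e ⊤ = ⊤ := by
  ext a b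
  · simp [sgEquiv, Set.image_univ, e.toEquiv.surjective.range_eq]
  · simp only [sgEquiv, Equiv.coe_fn_mk, SimpleGraph.Subgraph.map_adj, Relation.Map,
      SimpleGraph.Subgraph.top_adj]
    constructor
    · rintro ⟨u, v, huv, rfl, rfl⟩; exact e.map_adj_iff.2 huv
    · intro h
      exact ⟨e.symm a, e.symm b, by simpa using e.symm.map_adj_iff.2 h, by simp, by simp⟩

noncomputable def sgEquivIso (e : G ≃g G') (Y : G.Subgraph) : Y.coe ≃g ((sgEquiv e) Y).coe :=
  sgMapIso e.toHom e.toEquiv.injective Y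

end found

section counts
variable {V W : Type} {G : SimpleGraph V} {G' : SimpleGraph W}

/-- number of subgraphs isomorphic to F -/
noncomputable def sub' {k : ℕ} (F : SimpleGraph (Fin k)) (G : SimpleGraph V) : ℕ :=
  Nat.card {H : G.Subgraph // Nonempty (F ≃g H.coe)}

/-- number of covers -/
noncomputable def cov (L : GSeq) (G : SimpleGraph V) : ℕ :=
  Nat.card {C : Fin L.length → G.Subgraph //
    (∀ i, Nonempty ((L.get i).2 ≃g (C i).coe)) ∧ (⨆ i, C i) = ⊤}

lemma sub'_iso {k : ℕ} (F : SimpleGraph (Fin k)) (e : G ≃g G') : sub' F G = sub' F G' := by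
  apply Nat.card_congr
  apply Equiv.subtypeEquiv (sgEquiv e)
  intro H
  constructor
  · rintro ⟨i⟩; exact ⟨(sgEquivIso e H).comp i⟩
  · rintro ⟨i⟩; exact ⟨((sgEquivIso e H).symm).comp i⟩

lemma cov_iso (L : GSeq) (e : G ≃g G') : cov L G = cov L G' := by
  apply Nat.card_congr
  apply Equiv.subtypeEquiv (Equiv.arrowCongr (Equiv.refl (Fin L.length)) (sgEquiv e))
  intro C
  have harr : ∀ i, (Equiv.arrowCongr (Equiv.refl (Fin L.length)) (sgEquiv e)) C i
      = sgEquiv e (C i) := by intro i; simp [Equiv.arrowCongr]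
  constructor
  · rintro ⟨h1, h2⟩
    constructor
    · intro i
      rw [harr i]
      exact ⟨(sgEquivIso e (C i)).comp (h1 i).some⟩
    · rw [iSup_congr harr]
      show (⨆ i, (C i).map e.toHom) = ⊤
      rw [← sgMap_iSup e.toHom C, h2]
      exact congrArg (SimpleGraph.Subgraph.map e.toHom) rfl |>.trans (sgEquiv_top e)
  · rintro ⟨h1, h2⟩
    constructor
    · intro i
      have := (h1 i).some
      rw [harr i] at this
      exact ⟨((sgEquivIso e (C i)).symm).comp this⟩
    · rw [iSup_congr harr] at h2
      have h3 : sgEquiv e (⨆ i, C i) = sgEquiv e ⊤ := by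
        show (⨆ i, C i).map e.toHom = _
        rw [sgMap_iSup e.toHom C, sgEquiv_top]; exact h2
      exact (sgEquiv e).injective h3

end counts

section restrict
variable {V : Type} {G : SimpleGraph V}

lemma sgHom_injective (X : G.Subgraph) : Function.Injective X.hom := by
  intro a b h; exact Subtype.ext h

lemma coeSubgraph_top (X : G.Subgraph) :
    SimpleGraph.Subgraph.coeSubgraph (⊤ : X.coe.Subgraph) = X := by
  ext a b
  · simp [SimpleGraph.Subgraph.verts_coeSubgraph]
  · rw [SimpleGraph.Subgraph.coeSubgraph_adj]
    constructor
    · rintro ⟨hv, hw, h⟩; exact h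
    · intro h; exact ⟨X.edge_vert h, X.edge_vert h.symm, h⟩

lemma coeSubgraph_of_le {X Y : G.Subgraph} (h : Y ≤ X) :
    SimpleGraph.Subgraph.coeSubgraph (X.restrict Y) = Y := by
  rw [SimpleGraph.Subgraph.coeSubgraph_restrict_eq, inf_eq_right.mpr h]

/-- subgraphs of the coe of X correspond to subgraphs below X -/
noncomputable def sgRestrictEquiv (X : G.Subgraph) :
    X.coe.Subgraph ≃ {Y : G.Subgraph // Y ≤ X} where
  toFun Z := ⟨SimpleGraph.Subgraph.coeSubgraph Z, SimpleGraph.Subgraph.coeSubgraph_le Z⟩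
  invFun Y := X.restrict Y.1
  left_inv Z := SimpleGraph.Subgraph.restrict_coeSubgraph Z
  right_inv Y := Subtype.ext (coeSubgraph_of_le Y.2)

noncomputable def sgRestrictIso (X : G.Subgraph) (Z : X.coe.Subgraph) :
    Z.coe ≃g (SimpleGraph.Subgraph.coeSubgraph Z).coe :=
  sgMapIso X.hom (sgHom_injective X) Z

lemma coeSubgraph_iSup {X : G.Subgraph} {ι : Sort*} (C : ι → X.coe.Subgraph) :
    SimpleGraph.Subgraph.coeSubgraph (⨆ i, C i) = ⨆ i, SimpleGraph.Subgraph.coeSubgraph (C i) :=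
  sgMap_iSup X.hom C

end restrict

section wsum
variable {V W : Type}

/-- sum of an isomorphism-invariant weight over all subgraphs -/
noncomputable def wsum (w : ∀ (α : Type), SimpleGraph α → ℕ) [Finite V]
    (G : SimpleGraph V) : ℕ :=
  ∑ X : G.Subgraph, w _ X.coe

lemma wsum_iso (w : ∀ (α : Type), SimpleGraph α → ℕ)
    (hw : ∀ (α β : Type) (H : SimpleGraph α) (H' : SimpleGraph β), (H ≃g H') → w _ H = w _ H')
    [Finite V] [Finite W] {G : SimpleGraph V} {G' : SimpleGraph W} (e : G ≃g G') :
    wsum w G = wsum w G' := by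
  exact Fintype.sum_equiv (sgEquiv e) _ _ (fun X => hw _ _ _ _ (sgEquivIso e X))

open scoped Classical in
lemma wsum_coe (w : ∀ (α : Type), SimpleGraph α → ℕ)
    (hw : ∀ (α β : Type) (H : SimpleGraph α) (H' : SimpleGraph β), (H ≃g H') → w _ H = w _ H')
    [Finite V] {G : SimpleGraph V} (X : G.Subgraph) :
    wsum w X.coe = ∑ Y : G.Subgraph, if Y ≤ X then w _ Y.coe else 0 := by
  classical
  have h1 : wsum w X.coe = ∑ Y : {Y : G.Subgraph // Y ≤ X}, w _ (Y.1).coe :=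
    Fintype.sum_equiv (sgRestrictEquiv X) _ _ (fun Z => hw _ _ _ _ (sgRestrictIso X Z))
  rw [h1, ← Finset.sum_filter]
  exact (Finset.sum_subtype (Finset.univ.filter (fun Y => Y ≤ X))
    (fun x => by simp) (fun Y => w _ Y.coe)).symm

section kelly
variable {V : Type} [Fintype V] {G : SimpleGraph V}

omit [Fintype V] in
lemma le_induce_top_iff {G : SimpleGraph V} (v : V) (Y : G.Subgraph) :
    Y ≤ (⊤ : G.Subgraph).induce {v}ᶜ ↔ v ∉ Y.verts := by
  constructor
  · intro h hv
    exact (h.1 hv) rfl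
  · intro hv
    constructor
    · intro x hx
      simp only [SimpleGraph.Subgraph.induce_verts, Set.mem_compl_iff, Set.mem_singleton_iff]
      rintro rfl; exact hv hx
    · intro a b hab
      refine ⟨?_, ?_, Y.adj_sub hab⟩
      · simp only [Set.mem_compl_iff, Set.mem_singleton_iff]
        rintro rfl; exact hv (Y.edge_vert hab)
      · simp only [Set.mem_compl_iff, Set.mem_singleton_iff]
        rintro rfl; exact hv (Y.edge_vert hab.symm)

open scoped Classical in
lemma wsum_vdel (w : ∀ (α : Type), SimpleGraph α → ℕ)
    (hw : ∀ (α β : Type) (H : SimpleGraph α) (H' : SimpleGraph β), (H ≃g H') → w _ H = w _ H')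
    (G : SimpleGraph V) (v : V) :
    wsum w (G.induce {v}ᶜ) = ∑ Y : G.Subgraph, if v ∉ Y.verts then w _ Y.coe else 0 := by
  rw [wsum_iso w hw (show G.induce {v}ᶜ ≃g ((⊤ : G.Subgraph).induce {v}ᶜ).coe from
    { toEquiv := Equiv.refl _,
      map_rel_iff' := fun {a b} => Iff.intro (fun h => h.2.2) (fun h => ⟨a.2, b.2, h⟩) }),
    wsum_coe w hw]
  exact Finset.sum_congr rfl (fun Y _ => if_congr (le_induce_top_iff v Y) rfl rfl)

open scoped Classical in
lemma kelly_count (w : ∀ (α : Type), SimpleGraph α → ℕ)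
    (hw : ∀ (α β : Type) (H : SimpleGraph α) (H' : SimpleGraph β), (H ≃g H') → w _ H = w _ H')
    {k : ℕ} (hsupp : ∀ (α : Type) (H : SimpleGraph α), w _ H ≠ 0 → Nat.card α = k)
    (G : SimpleGraph V) :
    ∑ v : V, wsum w (G.induce {v}ᶜ) = (Fintype.card V - k) * wsum w G := by
  have h1 : ∀ v : V, wsum w (G.induce {v}ᶜ)
      = ∑ Y : G.Subgraph, if v ∉ Y.verts then w _ Y.coe else 0 := wsum_vdel w hw G
  rw [Finset.sum_congr rfl (fun v _ => h1 v), Finset.sum_comm]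
  rw [wsum, Finset.mul_sum]
  refine Finset.sum_congr rfl (fun Y _ => ?_)
  rw [Finset.sum_ite, Finset.sum_const, Finset.sum_const_zero, add_zero, smul_eq_mul]
  by_cases h0 : w _ Y.coe = 0
  · rw [h0, mul_zero, mul_zero]
  · congr 1
    have hcard : Nat.card ↥Y.verts = k := hsupp _ _ h0
    have : (Finset.univ.filter (fun v => v ∉ Y.verts)).card
        = Fintype.card V - Y.verts.toFinset.card := by
      rw [← Finset.card_compl]
      congr 1
      ext x
      simp
    rw [this]
    congr 1
    rw [← hcard, Nat.card_eq_fintype_card, Set.toFinset_card]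

end kelly

section recon
variable {n : ℕ}

lemma wsum_recon (w : ∀ (α : Type), SimpleGraph α → ℕ)
    (hw : ∀ (α β : Type) (H : SimpleGraph α) (H' : SimpleGraph β), (H ≃g H') → w _ H = w _ H')
    {k : ℕ} (hsupp : ∀ (α : Type) (H : SimpleGraph α), w _ H ≠ 0 → Nat.card α = k)
    (hk : k < n) {G G' : SimpleGraph (Fin n)} (f : Fin n ≃ Fin n)
    (hf : ∀ v, Nonempty (G.induce {v}ᶜ ≃g G'.induce {f v}ᶜ)) :
    wsum w G = wsum w G' := by
  have h1 := kelly_count w hw hsupp G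
  have h2 := kelly_count w hw hsupp G'
  have h3 : ∑ v : Fin n, wsum w (G.induce {v}ᶜ) = ∑ v : Fin n, wsum w (G'.induce {v}ᶜ) := by
    rw [Finset.sum_congr rfl (fun v _ => wsum_iso w hw (hf v).some)]
    exact Equiv.sum_comp f (fun v => wsum w (G'.induce {v}ᶜ))
  rw [h1, h2, Fintype.card_fin] at h3
  exact Nat.eq_of_mul_eq_mul_left (by omega) h3

end recon

section weights
variable {V : Type} [Finite V]

open scoped Classical in
noncomputable def w1 {k : ℕ} (F : SimpleGraph (Fin k)) : ∀ α : Type, SimpleGraph α → ℕ :=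
  fun _ H => if Nonempty (F ≃g H) then 1 else 0

lemma w1_iso {k : ℕ} (F : SimpleGraph (Fin k)) :
    ∀ (α β : Type) (H : SimpleGraph α) (H' : SimpleGraph β), (H ≃g H') → w1 F _ H = w1 F _ H' := by
  classical
  intro α β H H' e
  unfold w1
  by_cases hh : Nonempty (F ≃g H)
  · rw [if_pos hh, if_pos ⟨e.comp hh.some⟩]
  · rw [if_neg hh, if_neg (fun ⟨i⟩ => hh ⟨e.symm.comp i⟩)]

lemma w1_supp {k : ℕ} (F : SimpleGraph (Fin k)) :
    ∀ (α : Type) (H : SimpleGraph α), w1 F _ H ≠ 0 → Nat.card α = k := by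
  intro α H h
  unfold w1 at h
  split at h
  · next hne =>
    obtain ⟨e⟩ := hne
    rw [← Nat.card_congr e.toEquiv, Nat.card_eq_fintype_card, Fintype.card_fin]
  · exact absurd rfl h

open scoped Classical in
lemma wsum_w1 {k : ℕ} (F : SimpleGraph (Fin k)) {V : Type} [Finite V] (G : SimpleGraph V) :
    wsum (w1 F) G = sub' F G := by
  rw [sub', Nat.card_eq_fintype_card, Fintype.card_subtype, Finset.card_filter]
  unfold wsum w1
  exact Finset.sum_congr rfl (fun X _ => by convert rfl)

noncomputable def w2 (L : GSeq) (k : ℕ) : ∀ α : Type, SimpleGraph α → ℕ :=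
  fun α H => if Nat.card α = k then cov L H else 0

lemma w2_iso (L : GSeq) (k : ℕ) :
    ∀ (α β : Type) (H : SimpleGraph α) (H' : SimpleGraph β), (H ≃g H') →
      w2 L k _ H = w2 L k _ H' := by
  intro α β H H' e
  unfold w2
  rw [Nat.card_congr e.toEquiv, cov_iso L e]

lemma w2_supp (L : GSeq) (k : ℕ) :
    ∀ (α : Type) (H : SimpleGraph α), w2 L k _ H ≠ 0 → Nat.card α = k := by
  intro α H h
  unfold w2 at h
  split at h
  · assumption
  · exact absurd rfl h

end weights

section kocay
variable {V : Type} {G : SimpleGraph V}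

/-- covers of `X.coe` correspond to tuples of subgraphs of `G` with sup `X` -/
noncomputable def fiberEquiv (L : GSeq) (G : SimpleGraph V) (X : G.Subgraph) :
    {C : {C : Fin L.length → G.Subgraph // ∀ i, Nonempty ((L.get i).2 ≃g (C i).coe)} //
        (⨆ i, C.1 i) = X}
    ≃ {C : Fin L.length → X.coe.Subgraph //
        (∀ i, Nonempty ((L.get i).2 ≃g (C i).coe)) ∧ (⨆ i, C i) = ⊤} where
  toFun C := by
    refine ⟨fun i => X.restrict (C.1.1 i), ?_, ?_⟩
    · intro i
      have hle : C.1.1 i ≤ X := le_trans (le_iSup (fun j => C.1.1 j) i) (le_of_eq C.2)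
      have hcoe : SimpleGraph.Subgraph.coeSubgraph (X.restrict (C.1.1 i)) = C.1.1 i :=
        coeSubgraph_of_le hle
      have i1 : (X.restrict (C.1.1 i)).coe ≃g (C.1.1 i).coe := by
        have := sgRestrictIso X (X.restrict (C.1.1 i))
        rwa [hcoe] at this
      exact ⟨i1.symm.comp (C.1.2 i).some⟩
    · apply SimpleGraph.Subgraph.coeSubgraph_injective X
      rw [coeSubgraph_iSup, coeSubgraph_top]
      have : ∀ i, SimpleGraph.Subgraph.coeSubgraph (X.restrict (C.1.1 i)) = C.1.1 i :=
        fun i => coeSubgraph_of_le (le_trans (le_iSup (fun j => C.1.1 j) i) (le_of_eq C.2))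
      rw [iSup_congr this]
      exact C.2
  invFun D := by
    refine ⟨⟨fun i => SimpleGraph.Subgraph.coeSubgraph (D.1 i), ?_⟩, ?_⟩
    · intro i
      exact ⟨(sgRestrictIso X (D.1 i)).comp (D.2.1 i).some⟩
    · rw [← coeSubgraph_iSup, D.2.2, coeSubgraph_top]
  left_inv C := by
    apply Subtype.ext
    apply Subtype.ext
    funext i
    exact coeSubgraph_of_le (le_trans (le_iSup (fun j => C.1.1 j) i) (le_of_eq C.2))
  right_inv D := by
    apply Subtype.ext
    funext i
    exact SimpleGraph.Subgraph.restrict_coeSubgraph (D.1 i)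

open scoped Classical in
lemma kocay [Finite V] (L : GSeq) (G : SimpleGraph V) :
    ∏ i : Fin L.length, sub' (L.get i).2 G = ∑ X : G.Subgraph, cov L X.coe := by
  have h1 : ∏ i : Fin L.length, sub' (L.get i).2 G
      = Nat.card (∀ i : Fin L.length, {H : G.Subgraph // Nonempty ((L.get i).2 ≃g H.coe)}) := by
    rw [Nat.card_pi]
    rfl
  have h2 : Nat.card (∀ i : Fin L.length, {H : G.Subgraph // Nonempty ((L.get i).2 ≃g H.coe)})
      = Nat.card {C : Fin L.length → G.Subgraph // ∀ i, Nonempty ((L.get i).2 ≃g (C i).coe)} :=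
    Nat.card_congr (Equiv.subtypePiEquivPi).symm
  have h3 : Nat.card {C : Fin L.length → G.Subgraph // ∀ i, Nonempty ((L.get i).2 ≃g (C i).coe)}
      = ∑ X : G.Subgraph, cov L X.coe := by
    rw [Nat.card_congr (Equiv.sigmaFiberEquiv
      (fun C : {C : Fin L.length → G.Subgraph // ∀ i, Nonempty ((L.get i).2 ≃g (C i).coe)} =>
        ⨆ i, C.1 i)).symm]
    rw [Nat.card_eq_fintype_card, Fintype.card_sigma]
    refine Finset.sum_congr rfl (fun X _ => ?_)
    rw [← Nat.card_eq_fintype_card, Nat.card_congr (fiberEquiv L G X), cov]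
  rw [h1, h2, h3]

end kocay

section split
variable {n : ℕ}

open scoped Classical in
noncomputable def Aspan (L : GSeq) {n : ℕ} (G : SimpleGraph (Fin n)) : ℕ :=
  ∑ X : G.Subgraph, if X.verts = Set.univ then cov L X.coe else 0

open scoped Classical in
noncomputable def Bspan (L : GSeq) {n : ℕ} (G : SimpleGraph (Fin n)) : ℕ :=
  ∑ X : G.Subgraph, if X.verts ≠ Set.univ then cov L X.coe else 0

open scoped Classical in
lemma Aspan_add_Bspan (L : GSeq) (G : SimpleGraph (Fin n)) :
    Aspan L G + Bspan L G = ∑ X : G.Subgraph, cov L X.coe := by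
  rw [Aspan, Bspan, ← Finset.sum_add_distrib]
  refine Finset.sum_congr rfl (fun X _ => ?_)
  by_cases h : X.verts = Set.univ
  · rw [if_pos h, if_neg (by simpa using h), add_zero]
  · rw [if_neg h, if_pos h, zero_add]

lemma card_set_lt_iff_ne_univ (s : Set (Fin n)) : Nat.card s < n ↔ s ≠ Set.univ := by
  constructor
  · intro h hs
    rw [hs, Nat.card_coe_set_eq, Set.ncard_univ, Nat.card_eq_fintype_card,
      Fintype.card_fin] at h
    omega
  · intro hs
    rw [Nat.card_coe_set_eq]
    have h1 : s ⊂ Set.univ := Set.ssubset_univ_iff.mpr hs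
    have := Set.ncard_lt_ncard h1 Set.finite_univ
    rwa [Set.ncard_univ, Nat.card_eq_fintype_card, Fintype.card_fin] at this

open scoped Classical in
lemma Bspan_eq (L : GSeq) (G : SimpleGraph (Fin n)) :
    Bspan L G = ∑ k ∈ Finset.range n, wsum (w2 L k) G := by
  have h1 : ∀ k, wsum (w2 L k) G
      = ∑ X : G.Subgraph, if Nat.card ↥X.verts = k then cov L X.coe else 0 := by
    intro k
    unfold wsum w2
    exact Finset.sum_congr rfl (fun X _ => by convert rfl)
  symm
  rw [Finset.sum_congr rfl (fun k _ => h1 k), Finset.sum_comm, Bspan]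
  refine Finset.sum_congr rfl (fun X _ => ?_)
  rw [Finset.sum_ite_eq (Finset.range n) (Nat.card ↥X.verts) (fun _ => cov L X.coe)]
  exact if_congr (by rw [Finset.mem_range, card_set_lt_iff_ne_univ]) rfl rfl

lemma Aspan_recon (L : GSeq) (hL : ∀ F ∈ L, F.1 < n) {G G' : SimpleGraph (Fin n)}
    (f : Fin n ≃ Fin n) (hf : ∀ v, Nonempty (G.induce {v}ᶜ ≃g G'.induce {f v}ᶜ)) :
    Aspan L G = Aspan L G' := by
  have hprod : ∏ i : Fin L.length, sub' (L.get i).2 G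
      = ∏ i : Fin L.length, sub' (L.get i).2 G' := by
    refine Finset.prod_congr rfl (fun i _ => ?_)
    rw [← wsum_w1, ← wsum_w1]
    exact wsum_recon (w1 _) (w1_iso _) (w1_supp _) (hL _ (by simpa using List.get_mem L i.1 i.2)) f hf
  have hB : Bspan L G = Bspan L G' := by
    rw [Bspan_eq, Bspan_eq]
    refine Finset.sum_congr rfl (fun k hk => ?_)
    exact wsum_recon (w2 L k) (w2_iso L k) (w2_supp L k) (Finset.mem_range.mp hk) f hf
  have e1 := Aspan_add_Bspan L G
  have e2 := Aspan_add_Bspan L G'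
  rw [← kocay L G] at e1
  rw [← kocay L G'] at e2
  omega

end split

section group
variable {n : ℕ}

/-- number of spanning subgraphs of `G` isomorphic to `H` -/
noncomputable def tcount (H G : SimpleGraph (Fin n)) : ℕ :=
  Nat.card {X : G.Subgraph // X.verts = Set.univ ∧ Nonempty (H ≃g X.coe)}

open scoped Classical in
lemma Aspan_group (L : GSeq) (R : Finset (SimpleGraph (Fin n)))
    (hR : ∀ G : SimpleGraph (Fin n), ∃! H, H ∈ R ∧ Nonempty (G ≃g H))
    (G : SimpleGraph (Fin n)) :
    Aspan L G = ∑ H : ↥R, cov L (H : SimpleGraph (Fin n)) * tcount H G := by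
  have h0 : Aspan L G = ∑ X : {X : G.Subgraph // X.verts = Set.univ}, cov L X.1.coe := by
    rw [Aspan, ← Finset.sum_filter]
    exact Finset.sum_subtype (p := fun X : G.Subgraph => X.verts = Set.univ) _
      (fun x => by simp) (fun X : G.Subgraph => cov L X.coe)
  -- classifier on all subgraphs
  let c : G.Subgraph → ↥R := fun X =>
    ⟨(hR X.spanningCoe).choose, ((hR X.spanningCoe).choose_spec.1).1⟩
  have hc1 : ∀ X : G.Subgraph, Nonempty (X.spanningCoe ≃g (c X : SimpleGraph (Fin n))) :=
    fun X => ((hR X.spanningCoe).choose_spec.1).2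
  have hc2 : ∀ X : G.Subgraph, ∀ H : SimpleGraph (Fin n), H ∈ R →
      Nonempty (X.spanningCoe ≃g H) → H = (c X : SimpleGraph (Fin n)) :=
    fun X H h1 h2 => (hR X.spanningCoe).choose_spec.2 H ⟨h1, h2⟩
  rw [h0, ← Fintype.sum_fiberwise (fun X : {X : G.Subgraph // X.verts = Set.univ} => c X.1)
    (fun X => cov L X.1.coe)]
  refine Finset.sum_congr rfl (fun H _ => ?_)
  have hconst : ∀ X : {X : {X : G.Subgraph // X.verts = Set.univ} // c X.1 = H},
      cov L X.1.1.coe = cov L (H : SimpleGraph (Fin n)) := by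
    rintro ⟨⟨X, hXv⟩, hX⟩
    have e1 : X.spanningCoe ≃g X.coe :=
      X.spanningCoeEquivCoeOfSpanning (SimpleGraph.Subgraph.isSpanning_iff.mpr hXv)
    have e2 := (hc1 X).some
    rw [hX] at e2
    exact (cov_iso L e1.symm).trans (cov_iso L e2)
  rw [Finset.sum_congr rfl (fun X _ => hconst X), Finset.sum_const, smul_eq_mul, mul_comm]
  congr 1
  rw [tcount, Nat.card_eq_fintype_card]
  apply Fintype.card_congr
  refine Equiv.trans (Equiv.subtypeSubtypeEquivSubtypeInter
    (fun X : G.Subgraph => X.verts = Set.univ) (fun X => c X = H)) ?_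
  apply Equiv.subtypeEquivRight
  intro X
  constructor
  · rintro ⟨hXv, hXc⟩
    refine ⟨hXv, ?_⟩
    have e1 : X.spanningCoe ≃g X.coe :=
      X.spanningCoeEquivCoeOfSpanning (SimpleGraph.Subgraph.isSpanning_iff.mpr hXv)
    have e2 := (hc1 X).some
    rw [hXc] at e2
    exact ⟨e1.comp e2.symm⟩
  · rintro ⟨hXv, ⟨e⟩⟩
    refine ⟨hXv, ?_⟩
    have e1 : X.spanningCoe ≃g X.coe :=
      X.spanningCoeEquivCoeOfSpanning (SimpleGraph.Subgraph.isSpanning_iff.mpr hXv)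
    have := hc2 X H H.2 ⟨e.symm.comp e1⟩
    exact Subtype.ext this.symm
end group

section finale

lemma mulVec_zero_imp {ι κ : Type} [Fintype ι] [Fintype κ] [DecidableEq κ]
    (M : Matrix ι κ ℝ) (h : M.rank = Fintype.card κ) (u : κ → ℝ)
    (hu : M.mulVec u = 0) : u = 0 := by
  have hker : u ∈ LinearMap.ker M.mulVecLin := by
    rw [LinearMap.mem_ker, Matrix.mulVecLin_apply, hu]
  have hrn := M.mulVecLin.finrank_range_add_finrank_ker
  rw [Module.finrank_fintype_fun_eq_card] at hrn
  rw [Matrix.rank] at h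
  have h0 : Module.finrank ℝ (LinearMap.ker M.mulVecLin) = 0 := by omega
  rw [Submodule.finrank_eq_zero] at h0
  rw [h0, Submodule.mem_bot] at hker
  exact hker

lemma iso_of_spanning_le {n : ℕ} {G G' G₁ G₂ : SimpleGraph (Fin n)}
    (h1 : G₁ ≤ G') (e1 : G ≃g G₁) (h2 : G₂ ≤ G) (e2 : G' ≃g G₂) :
    Nonempty (G' ≃g G) := by
  classical
  have key : ∀ {A B : SimpleGraph (Fin n)}, (A ≃g B) →
      A.edgeFinset.card = B.edgeFinset.card := by
    intro A B e
    rw [SimpleGraph.edgeFinset_card, SimpleGraph.edgeFinset_card, ← Nat.card_eq_fintype_card,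
      ← Nat.card_eq_fintype_card]
    exact Nat.card_congr e.mapEdgeSet
  have c1 : G.edgeFinset.card = G₁.edgeFinset.card := key e1
  have c2 : G'.edgeFinset.card = G₂.edgeFinset.card := key e2
  have le1 : G₁.edgeFinset.card ≤ G'.edgeFinset.card :=
    Finset.card_le_card (SimpleGraph.edgeFinset_mono h1)
  have le2 : G₂.edgeFinset.card ≤ G.edgeFinset.card :=
    Finset.card_le_card (SimpleGraph.edgeFinset_mono h2)
  have hcard : G₁.edgeFinset.card = G'.edgeFinset.card := by omega
  have : G₁.edgeFinset = G'.edgeFinset :=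
    Finset.eq_of_subset_of_card_le (SimpleGraph.edgeFinset_mono h1) (le_of_eq hcard.symm)
  have hG : G₁ = G' := SimpleGraph.edgeFinset_inj.mp this
  exact ⟨(hG ▸ e1).symm⟩

end finale


/-- `R` is a transversal of the isomorphism classes of graphs in `C`:
it contains exactly one representative of each isomorphism class in `C`. -/
def IsIsoTransversal {n : ℕ} (C : Set (SimpleGraph (Fin n)))
    (R : Finset (SimpleGraph (Fin n))) : Prop :=
  ↑R ⊆ C ∧ ∀ G ∈ C, ∃! H, H ∈ R ∧ Nonempty (G ≃g H)

/-- `D` is a transversal of the reconstruction classes of graphs in `C`: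
it contains exactly one representative of each `∼`-equivalence class in `C`. -/
def IsReconTransversal {n : ℕ} (C : Set (SimpleGraph (Fin n)))
    (D : Finset (SimpleGraph (Fin n))) : Prop :=
  ↑D ⊆ C ∧ ∀ G ∈ C, ∃! H, H ∈ D ∧ IsReconstruction G H

/-- Let `n ≥ 3` and suppose there is a finite family `𝔉 = (L_1, …, L_l)` of
sequences of graphs, each graph having fewer than `n` vertices, such that the
matrix of covering numbers `c(L_i, H)` — rows indexed by `Fin l`, columns
indexed by the isomorphism classes of `n`-vertex graphs (a transversal `R` of
all `n`-vertex graphs) — has rank `ψ(n) = R.card` over `ℝ`. Then every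
`n`-vertex graph is reconstructible. -/
theorem stmt_9 {n l : ℕ} (hn : 3 ≤ n)
    (𝔉 : Fin l → GSeq) (h𝔉 : ∀ i : Fin l, ∀ F ∈ 𝔉 i, F.1 < n)
    (R : Finset (SimpleGraph (Fin n)))
    (hR : IsIsoTransversal Set.univ R)
    (hrank : (Matrix.of fun (i : Fin l) (H : ↥R) =>
        ((coverCount (𝔉 i) (H : SimpleGraph (Fin n)) : ℝ))).rank = R.card) :
    ∀ G G' : SimpleGraph (Fin n), IsReconstruction G G' → Nonempty (G' ≃g G) := by
  intro G G' hrec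
  obtain ⟨f, hf⟩ := hrec
  classical
  have hRu : ∀ K : SimpleGraph (Fin n), ∃! H, H ∈ R ∧ Nonempty (K ≃g H) :=
    fun K => hR.2 K (Set.mem_univ K)
  have covc : ∀ (L : GSeq) (K : SimpleGraph (Fin n)), coverCount L K = cov L K :=
    fun L K => rfl
  -- the vector of spanning-subgraph counts is reconstruction-invariant
  have ht : ∀ H : ↥R, tcount (H : SimpleGraph (Fin n)) G
      = tcount (H : SimpleGraph (Fin n)) G' := by
    have hA : ∀ i : Fin l, Aspan (𝔉 i) G = Aspan (𝔉 i) G' := fun i =>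
      Aspan_recon (𝔉 i) (h𝔉 i) f hf
    have key : ∀ (i : Fin l) (K : SimpleGraph (Fin n)),
        ∑ H : ↥R, (coverCount (𝔉 i) (H : SimpleGraph (Fin n)) : ℝ)
          * (tcount (H : SimpleGraph (Fin n)) K : ℝ) = (Aspan (𝔉 i) K : ℝ) := by
      intro i K
      rw [Aspan_group (𝔉 i) R hRu K, Nat.cast_sum]
      exact Finset.sum_congr rfl (fun H _ => by rw [covc, Nat.cast_mul])
    have hu : (fun H : ↥R => (tcount (H : SimpleGraph (Fin n)) G : ℝ)
        - (tcount (H : SimpleGraph (Fin n)) G' : ℝ)) = 0 := by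
      apply mulVec_zero_imp (Matrix.of fun (i : Fin l) (H : ↥R) =>
        ((coverCount (𝔉 i) (H : SimpleGraph (Fin n)) : ℝ)))
      · rw [hrank, Fintype.card_coe]
      · funext i
        simp only [Matrix.mulVec, dotProduct, Matrix.of_apply, Pi.zero_apply]
        have : ∀ H : ↥R, (coverCount (𝔉 i) (H : SimpleGraph (Fin n)) : ℝ)
            * ((tcount (H : SimpleGraph (Fin n)) G : ℝ)
              - (tcount (H : SimpleGraph (Fin n)) G' : ℝ))
            = (coverCount (𝔉 i) (H : SimpleGraph (Fin n)) : ℝ)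
              * (tcount (H : SimpleGraph (Fin n)) G : ℝ)
            - (coverCount (𝔉 i) (H : SimpleGraph (Fin n)) : ℝ)
              * (tcount (H : SimpleGraph (Fin n)) G' : ℝ) := fun H => mul_sub _ _ _
        rw [Finset.sum_congr rfl (fun H _ => this H), Finset.sum_sub_distrib,
          key i G, key i G', hA i, sub_self]
    intro H
    have h1 := congrFun hu H
    simp only [Pi.zero_apply, sub_eq_zero] at h1
    exact_mod_cast h1
  -- representatives
  obtain ⟨H₀, ⟨hH₀R, hGH₀⟩, _⟩ := hRu G
  obtain ⟨H₁, ⟨hH₁R, hGH₁⟩, _⟩ := hRu G'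
  -- positivity of tcount for own representative
  have hpos : ∀ (K : SimpleGraph (Fin n)) (H : SimpleGraph (Fin n)),
      Nonempty (K ≃g H) → 0 < tcount H K := by
    intro K H ⟨e⟩
    rw [tcount]
    refine Nat.card_pos_iff.mpr ⟨⟨⟨⊤, ?_, ?_⟩⟩, inferInstance⟩
    · exact SimpleGraph.Subgraph.verts_top
    · exact ⟨(SimpleGraph.Subgraph.topIso.symm).comp e.symm⟩
  -- extract spanning subgraphs
  have hex : ∀ (K K' H : SimpleGraph (Fin n)), Nonempty (K ≃g H) → 0 < tcount H K' →
      ∃ G₁ : SimpleGraph (Fin n), G₁ ≤ K' ∧ Nonempty (K ≃g G₁) := by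
    intro K K' H ⟨e⟩ hpos'
    rw [tcount] at hpos'
    obtain ⟨⟨X, hXv, ⟨eX⟩⟩⟩ := (Nat.card_pos_iff.mp hpos').1
    refine ⟨X.spanningCoe, X.spanningCoe_le, ?_⟩
    have es : X.spanningCoe ≃g X.coe :=
      X.spanningCoeEquivCoeOfSpanning (SimpleGraph.Subgraph.isSpanning_iff.mpr hXv)
    exact ⟨es.symm.comp (eX.comp e)⟩
  obtain ⟨G₁, hG₁le, hG₁⟩ := hex G G' H₀ hGH₀ (by rw [← ht ⟨H₀, hH₀R⟩]; exact hpos G H₀ hGH₀)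
  obtain ⟨G₂, hG₂le, hG₂⟩ := hex G' G H₁ hGH₁ (by rw [ht ⟨H₁, hH₁R⟩]; exact hpos G' H₁ hGH₁)
  exact iso_of_spanning_le hG₁le hG₁.some hG₂le hG₂.some
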